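/- (Theorem 2, Threshold Expansion approximation guarantee, stated for any execution trace satisfying the greedy invariant.) Let P be a finite nonempty set of paths, x an impact vector, ε ∈ (0,1), ϵ ∈ [0,1), and let s* be an impact vector with d_{x+s*}(p) ≥ T for all p ∈ P and ‖s*‖ > 0. Let s_0 = 0 and, for t = 1,…,L, let s_t = s_{t−1} + ⟨v_t, x̂_t⟩ with x̂_t > 0, where, writing P_{t−1} = {p ∈ P : d_{x+s_{t−1}}(p) < T(1−ε)}, the following holds for every t: for every vertex u with (s* \ s_{t−1})_u > 0, r_{P_{t−1},x+s_{t−1},v_t}(x̂_t)/x̂_t ≥ (1−ϵ) · r_{P_{t−1},x+s_{t−1},u}((s*\s_{t−1})_u)/(s*\s_{t−1})_u. If P_{L−1} ≠ ∅, then ‖s_L‖ = ∑_{t=1}^{L} x̂_t ≤ ‖s*‖ · (ln(|P|·ε^{−1}) + 1)/(1−ϵ). -/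

import Mathlib

/-- The capped length of a path `p` under impact vector `x`:
`d_x(p) = min(∑_{v ∈ p} f_v(x_v), T)`. -/
noncomputable def dLen {V : Type*} (f : V → ℝ → ℝ) (T : ℝ) (x : V → ℝ) (p : List V) : ℝ :=
  min ((p.map (fun v => f v (x v))).sum) T

/-- `r_{P,w,v}(a) = ∑_{p∈P} (d_{w+⟨v,a⟩}(p) − d_w(p))`. -/
noncomputable def rGain {V : Type*} [DecidableEq V] (f : V → ℝ → ℝ) (T : ℝ)
    (P : Finset (List V)) (w : V → ℝ) (v : V) (a : ℝ) : ℝ :=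
  ∑ p ∈ P, (dLen f T (w + Pi.single v a) p - dLen f T w p)

section Aux
variable {V : Type*} [DecidableEq V] (f : V → ℝ → ℝ) (T : ℝ)

omit [DecidableEq V] in
lemma dLen_le (x : V → ℝ) (p : List V) : dLen f T x p ≤ T := min_le_right _ _

omit [DecidableEq V] in
lemma dLen_nonneg (hT : 0 ≤ T) (hf0 : ∀ v y, 0 ≤ y → 0 ≤ f v y) (x : V → ℝ)
    (hx : ∀ u, 0 ≤ x u) (p : List V) : 0 ≤ dLen f T x p := by
  apply le_min _ hT
  apply List.sum_nonneg
  intro a ha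
  obtain ⟨v, _, rfl⟩ := List.mem_map.1 ha
  exact hf0 v _ (hx v)

omit [DecidableEq V] in
lemma dLen_mono (hf : ∀ v, MonotoneOn (f v) (Set.Ici 0)) (x y : V → ℝ)
    (hx : ∀ u, 0 ≤ x u) (hxy : ∀ u, x u ≤ y u) (p : List V) :
    dLen f T x p ≤ dLen f T y p := by
  apply min_le_min _ le_rfl
  apply List.sum_le_sum
  intro v _
  exact hf v (hx v) ((hx v).trans (hxy v)) (hxy v)

lemma dLen_toFinset (x : V → ℝ) (p : List V) (hp : p.Nodup) :
    dLen f T x p = min (∑ v ∈ p.toFinset, f v (x v)) T := by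
  rw [dLen, List.sum_toFinset _ hp]

lemma rGain_zero (Q : Finset (List V)) (w : V → ℝ) (u : V) :
    rGain f T Q w u 0 = 0 := by
  unfold rGain
  apply Finset.sum_eq_zero
  intro p _
  rw [Pi.single_zero, add_zero, sub_self]

omit [DecidableEq V] in
lemma minStep (a y δ : ℝ) (hay : a ≤ y) (hδ : 0 ≤ δ) :
    min (y + δ) T - min y T ≤ min (a + δ) T - min a T := by
  simp only [min_def]; split_ifs <;> linarith

omit [DecidableEq V] in
lemma minSubadd {ι : Type*} (s : Finset ι) (a : ℝ) (δ : ι → ℝ)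
    (hδ : ∀ i ∈ s, 0 ≤ δ i) :
    min (a + ∑ i ∈ s, δ i) T - min a T ≤ ∑ i ∈ s, (min (a + δ i) T - min a T) := by
  induction s using Finset.cons_induction with
  | empty => simp
  | cons j s' hj ih =>
    rw [Finset.sum_cons, Finset.sum_cons]
    have hS : 0 ≤ ∑ i ∈ s', δ i := Finset.sum_nonneg fun i hi => hδ i (Finset.mem_cons_of_mem hi)
    have h1 : min ((a + ∑ i ∈ s', δ i) + δ j) T - min (a + ∑ i ∈ s', δ i) T
        ≤ min (a + δ j) T - min a T :=
      minStep T a _ (δ j) (by linarith) (hδ j (Finset.mem_cons_self _ _))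
    have h2 := ih (fun i hi => hδ i (Finset.mem_cons_of_mem hi))
    have h3 : a + (δ j + ∑ i ∈ s', δ i) = (a + ∑ i ∈ s', δ i) + δ j := by ring
    rw [h3]
    linarith

lemma dLen_subadd [Fintype V] (hf : ∀ v, MonotoneOn (f v) (Set.Ici 0))
    (w Δ : V → ℝ) (hw : ∀ u, 0 ≤ w u) (hΔ : ∀ u, 0 ≤ Δ u)
    (p : List V) (hp : p.Nodup) :
    dLen f T (w + Δ) p - dLen f T w p ≤
      ∑ u : V, (dLen f T (w + Pi.single u (Δ u)) p - dLen f T w p) := by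
  classical
  set a : ℝ := ∑ v ∈ p.toFinset, f v (w v) with ha
  set δ : V → ℝ := fun u => f u (w u + Δ u) - f u (w u) with hδdef
  have hδnn : ∀ u, 0 ≤ δ u := fun u =>
    sub_nonneg.2 (hf u (hw u) (Set.mem_Ici.2 (add_nonneg (hw u) (hΔ u)))
      (le_add_of_nonneg_right (hΔ u)))
  have hfull : dLen f T (w + Δ) p = min (a + ∑ v ∈ p.toFinset, δ v) T := by
    rw [dLen_toFinset f T _ p hp]
    congr 1
    rw [← Finset.sum_add_distrib]
    apply Finset.sum_congr rfl
    intro v _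
    simp [hδdef, Pi.add_apply]
  have hbase : dLen f T w p = min a T := dLen_toFinset f T _ p hp
  have hsingle : ∀ u : V, dLen f T (w + Pi.single u (Δ u)) p
      = min (a + if u ∈ p.toFinset then δ u else 0) T := by
    intro u
    rw [dLen_toFinset f T _ p hp]
    congr 1
    rw [← Finset.sum_ite_eq' p.toFinset u δ, ← Finset.sum_add_distrib]
    apply Finset.sum_congr rfl
    intro v hv
    by_cases hvu : v = u
    · subst hvu; simp [hδdef, Pi.single_apply]
    · simp [Pi.single_apply, hvu]
  rw [hfull, hbase]
  calc min (a + ∑ v ∈ p.toFinset, δ v) T - min a T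
      ≤ ∑ v ∈ p.toFinset, (min (a + δ v) T - min a T) :=
        minSubadd T _ a δ (fun i _ => hδnn i)
    _ = ∑ v ∈ p.toFinset, (min (a + if v ∈ p.toFinset then δ v else 0) T - min a T) := by
        apply Finset.sum_congr rfl; intro u hu; rw [if_pos hu]
    _ = ∑ u : V, (min (a + if u ∈ p.toFinset then δ u else 0) T - min a T) :=
        Finset.sum_subset (Finset.subset_univ _) (fun u _ hu => by rw [if_neg hu]; simp)
    _ = ∑ u : V, (dLen f T (w + Pi.single u (Δ u)) p - min a T) := by
        apply Finset.sum_congr rfl; intro u _; rw [hsingle u]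

end Aux

set_option maxHeartbeats 1000000 in
open scoped Classical in
/-- Theorem 2: Threshold Expansion approximation guarantee, stated for
any execution trace satisfying the greedy invariant. -/
theorem stmt8 {V : Type*} [Fintype V] [DecidableEq V]
    (f : V → ℝ → ℝ) (T : ℝ) (hT : 0 < T)
    (hf : ∀ v, MonotoneOn (f v) (Set.Ici 0))
    (hf0 : ∀ v y, 0 ≤ y → 0 ≤ f v y)
    (P : Finset (List V)) (hPne : P.Nonempty) (hP : ∀ p ∈ P, p.Nodup)
    (x : V → ℝ) (hx : ∀ u, 0 ≤ x u)
    (ε : ℝ) (hε0 : 0 < ε) (hε1 : ε < 1)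
    (ϵ : ℝ) (hϵ0 : 0 ≤ ϵ) (hϵ1 : ϵ < 1)
    (sStar : V → ℝ) (hsStar : ∀ u, 0 ≤ sStar u)
    (hopt : ∀ p ∈ P, T ≤ dLen f T (x + sStar) p)
    (L : ℕ) (hL : 1 ≤ L)
    (s : ℕ → V → ℝ) (v : ℕ → V) (xhat : ℕ → ℝ)
    (hs0 : s 0 = 0)
    (hxhat : ∀ t, 1 ≤ t → t ≤ L → 0 < xhat t)
    (hstep : ∀ t, 1 ≤ t → t ≤ L → s t = s (t - 1) + Pi.single (v t) (xhat t))
    (Pt : ℕ → Finset (List V))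
    (hPt : ∀ t, Pt t = P.filter (fun p => dLen f T (x + s t) p < T * (1 - ε)))
    (hgreedy : ∀ t, 1 ≤ t → t ≤ L → ∀ u, 0 < max (sStar u - s (t - 1) u) 0 →
      (1 - ϵ) * (rGain f T (Pt (t - 1)) (x + s (t - 1)) u (max (sStar u - s (t - 1) u) 0)
          / max (sStar u - s (t - 1) u) 0)
        ≤ rGain f T (Pt (t - 1)) (x + s (t - 1)) (v t) (xhat t) / xhat t)
    (hfinal : (Pt (L - 1)).Nonempty) :
    ∑ t ∈ Finset.Icc 1 L, xhat t ≤
      (∑ u : V, sStar u) * (Real.log ((P.card : ℝ) * ε⁻¹) + 1) / (1 - ϵ) := by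
  set S : ℝ := ∑ u : V, sStar u with hSdef
  -- basic facts about s
  have hstep' : ∀ t : ℕ, t + 1 ≤ L → s (t+1) = s t + Pi.single (v (t+1)) (xhat (t+1)) := by
    intro t h
    have := hstep (t+1) (by omega) h
    simpa using this
  have hsnn : ∀ t, t ≤ L → ∀ u, 0 ≤ s t u := by
    intro t
    induction t with
    | zero => intro _ u; simp [hs0]
    | succ n ih =>
      intro h u
      rw [hstep' n h]
      have h1 := ih (by omega) u
      have h2 : (0:ℝ) ≤ (Pi.single (v (n+1)) (xhat (n+1)) : V → ℝ) u := by
        rw [Pi.single_apply]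
        split
        · exact (hxhat (n+1) (by omega) h).le
        · exact le_rfl
      simp only [Pi.add_apply]
      linarith
  have hsle : ∀ a b : ℕ, a ≤ b → b ≤ L → ∀ u, s a u ≤ s b u := by
    intro a b hab
    induction b with
    | zero =>
      intro _ u
      obtain rfl : a = 0 := Nat.le_zero.1 hab
      exact le_rfl
    | succ n ih =>
      intro h u
      rcases Nat.eq_or_lt_of_le hab with h1 | h1
      · rw [h1]
      · have h2 : a ≤ n := by omega
        refine (ih h2 (by omega) u).trans ?_
        rw [hstep' n h]
        have h3 : (0:ℝ) ≤ (Pi.single (v (n+1)) (xhat (n+1)) : V → ℝ) u := by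
          rw [Pi.single_apply]
          split
          · exact (hxhat (n+1) (by omega) h).le
          · exact le_rfl
        simp only [Pi.add_apply]
        linarith
  have hwnn : ∀ t, t ≤ L → ∀ u, 0 ≤ (x + s t) u := fun t ht u =>
    add_nonneg (hx u) (hsnn t ht u)
  have hdmono : ∀ a b : ℕ, a ≤ b → b ≤ L → ∀ p,
      dLen f T (x + s a) p ≤ dLen f T (x + s b) p := by
    intro a b hab hbL p
    exact dLen_mono f T hf _ _ (hwnn a (hab.trans hbL)) (fun u => by
      simp only [Pi.add_apply]
      linarith [hsle a b hab hbL u]) p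
  have hPtsub : ∀ a b : ℕ, a ≤ b → b ≤ L → Pt b ⊆ Pt a := by
    intro a b hab hbL
    rw [hPt, hPt]
    intro p hp
    rw [Finset.mem_filter] at hp ⊢
    exact ⟨hp.1, lt_of_le_of_lt (hdmono a b hab hbL p) hp.2⟩
  have hPtP : ∀ t, Pt t ⊆ P := by
    intro t
    rw [hPt]
    exact Finset.filter_subset _ _
  -- the deficit potential
  set D : ℕ → ℝ := fun t => ∑ p ∈ Pt t, (T - dLen f T (x + s t) p) with hDdef
  have hDnn : ∀ t, 0 ≤ D t :=
    fun t => Finset.sum_nonneg fun p _ => sub_nonneg.2 (dLen_le f T _ p)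
  have hSpos : 0 < S := by
    by_contra hc
    push_neg at hc
    have hS0 : ∀ u, sStar u = 0 := by
      intro u
      have h1 : ∑ u : V, sStar u ≤ 0 := hc
      have := (Finset.sum_eq_zero_iff_of_nonneg (fun u _ => hsStar u)).1
        (le_antisymm h1 (Finset.sum_nonneg fun u _ => hsStar u))
      exact this u (Finset.mem_univ u)
    obtain ⟨p, hp⟩ := hfinal
    have hpP : p ∈ P := hPtP _ hp
    have hlt : dLen f T (x + s (L-1)) p < T * (1 - ε) := by
      rw [hPt] at hp
      exact (Finset.mem_filter.1 hp).2
    have : dLen f T (x + sStar) p ≤ dLen f T (x + s (L-1)) p := by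
      apply dLen_mono f T hf _ _ (fun u => by simp only [Pi.add_apply, hS0 u, add_zero]; exact hx u)
      intro u
      simp only [Pi.add_apply, hS0 u]
      linarith [hsnn (L-1) (by omega) u]
    have := hopt p hpP
    nlinarith
  have hKEY : ∀ t, 1 ≤ t → t ≤ L →
      (1 - ϵ) * D (t-1) * xhat t
        ≤ rGain f T (Pt (t-1)) (x + s (t-1)) (v t) (xhat t) * S := by
    intro t ht htL
    have htL1 : t - 1 ≤ L := by omega
    set w : V → ℝ := x + s (t-1) with hwdef
    set Δ : V → ℝ := fun u => max (sStar u - s (t-1) u) 0 with hΔdef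
    have hwnn' : ∀ u, 0 ≤ w u := hwnn (t-1) htL1
    have hΔnn : ∀ u, 0 ≤ Δ u := fun u => le_max_right _ _
    have hΔle : ∀ u, Δ u ≤ sStar u := by
      intro u
      have h1 := hsnn (t-1) htL1 u
      have h2 := hsStar u
      simp only [hΔdef]
      rw [max_le_iff]
      constructor <;> linarith
    have hfullT : ∀ p ∈ P, dLen f T (w + Δ) p = T := by
      intro p hp
      refine le_antisymm (dLen_le f T _ p) ?_
      refine le_trans (hopt p hp)
        (dLen_mono f T hf _ _ (fun u => add_nonneg (hx u) (hsStar u)) ?_ p)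
      intro u
      simp only [Pi.add_apply, hwdef, hΔdef]
      rcases le_total (sStar u - s (t-1) u) 0 with h | h
      · rw [max_eq_right h]; linarith
      · rw [max_eq_left h]; linarith
    have hsum : D (t-1) ≤ ∑ u : V, rGain f T (Pt (t-1)) w u (Δ u) := by
      have swap : ∑ u : V, rGain f T (Pt (t-1)) w u (Δ u)
          = ∑ p ∈ Pt (t-1), ∑ u : V, (dLen f T (w + Pi.single u (Δ u)) p - dLen f T w p) := by
        unfold rGain; rw [Finset.sum_comm]
      rw [swap, hDdef]
      apply Finset.sum_le_sum
      intro p hp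
      have hpP := hPtP _ hp
      have h1 := dLen_subadd f T hf w Δ hwnn' hΔnn p (hP p hpP)
      rw [hfullT p hpP] at h1
      simp only [hwdef] at h1 ⊢
      linarith
    have hPtne : (Pt (t-1)).Nonempty :=
      hfinal.mono (hPtsub (t-1) (L-1) (by omega) (by omega))
    have hS'pos : 0 < ∑ u : V, Δ u := by
      by_contra hc
      push_neg at hc
      have hΔ0 : ∀ u, Δ u = 0 := by
        intro u
        have := (Finset.sum_eq_zero_iff_of_nonneg (fun u _ => hΔnn u)).1
          (le_antisymm hc (Finset.sum_nonneg fun u _ => hΔnn u))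
        exact this u (Finset.mem_univ u)
      obtain ⟨p, hp⟩ := hPtne
      have hpP := hPtP _ hp
      have hlt : dLen f T (x + s (t-1)) p < T * (1 - ε) := by
        rw [hPt] at hp
        exact (Finset.mem_filter.1 hp).2
      have hle : dLen f T (x + sStar) p ≤ dLen f T (x + s (t-1)) p := by
        apply dLen_mono f T hf _ _ (fun u => add_nonneg (hx u) (hsStar u))
        intro u
        have h2 : max (sStar u - s (t-1) u) 0 = 0 := by
          have := hΔ0 u
          rw [hΔdef] at this
          exact this
        have h3 : sStar u - s (t-1) u ≤ 0 := by
          have := le_max_left (sStar u - s (t-1) u) 0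
          rw [h2] at this
          exact this
        simp only [Pi.add_apply]
        linarith
      nlinarith [hopt p hpP]
    have havg : ∃ u, 0 < Δ u ∧
        D (t-1) * Δ u ≤ rGain f T (Pt (t-1)) w u (Δ u) * (∑ u : V, Δ u) := by
      by_contra hc
      push_neg at hc
      have hle : ∀ u ∈ (Finset.univ : Finset V),
          rGain f T (Pt (t-1)) w u (Δ u) * (∑ u : V, Δ u) ≤ D (t-1) * Δ u := by
        intro u _
        rcases eq_or_lt_of_le (hΔnn u) with h | h
        · rw [← h, rGain_zero f T (Pt (t-1)) w u]
          simp
        · exact (hc u h).le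
      obtain ⟨u₀, -, hu₀⟩ := Finset.exists_lt_of_sum_lt
        (f := fun _ : V => (0:ℝ)) (g := Δ) (by simpa using hS'pos)
      have hstrict : ∑ u : V, rGain f T (Pt (t-1)) w u (Δ u) * (∑ u : V, Δ u)
          < ∑ u : V, D (t-1) * Δ u :=
        Finset.sum_lt_sum hle ⟨u₀, Finset.mem_univ u₀, hc u₀ hu₀⟩
      rw [← Finset.sum_mul, ← Finset.mul_sum] at hstrict
      nlinarith [hS'pos]
    obtain ⟨u, hu, hua⟩ := havg
    have hg := hgreedy t ht htL u (by rw [hΔdef] at hu; exact hu)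
    have hSigLeS : ∑ u : V, Δ u ≤ S := Finset.sum_le_sum (fun u _ => hΔle u)
    have hau : Δ u = max (sStar u - s (t - 1) u) 0 := by rw [hΔdef]
    rw [hau] at hu hua
    set a : ℝ := max (sStar u - s (t - 1) u) 0
    set ru : ℝ := rGain f T (Pt (t-1)) w u a
    set rt : ℝ := rGain f T (Pt (t-1)) (x + s (t-1)) (v t) (xhat t)
    have hSig : 0 < ∑ u : V, Δ u := hS'pos
    have hxt := hxhat t ht htL
    have h1 : D (t-1) / (∑ u : V, Δ u) ≤ ru / a := by
      rw [div_le_div_iff₀ hSig hu]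
      linarith
    have h2 : D (t-1) / S ≤ D (t-1) / (∑ u : V, Δ u) := by
      rw [div_le_div_iff₀ hSpos hSig]
      nlinarith [hDnn (t-1)]
    have h3 : (1 - ϵ) * (D (t-1) / S) ≤ rt / xhat t := by
      refine le_trans (mul_le_mul_of_nonneg_left (h2.trans h1) (by linarith)) ?_
      convert hg using 3
    have h4 : ((1 - ϵ) * D (t-1)) / S ≤ rt / xhat t := by
      rw [mul_div_assoc]
      exact h3
    rw [div_le_div_iff₀ hSpos hxt] at h4
    linarith
  have hrle : ∀ t, 1 ≤ t → t ≤ L →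
      rGain f T (Pt (t-1)) (x + s (t-1)) (v t) (xhat t) ≤ D (t-1) := by
    intro t ht htL
    unfold rGain
    rw [hDdef]
    apply Finset.sum_le_sum
    intro p hp
    have := dLen_le f T (x + s (t-1) + Pi.single (v t) (xhat t)) p
    linarith
  have hDrec : ∀ t, 1 ≤ t → t ≤ L →
      D t ≤ D (t-1) - rGain f T (Pt (t-1)) (x + s (t-1)) (v t) (xhat t) := by
    intro t ht htL
    have hxst : x + s t = (x + s (t-1)) + Pi.single (v t) (xhat t) := by
      rw [hstep t ht htL, add_assoc]
    have h1 : D t ≤ ∑ p ∈ Pt (t-1), (T - dLen f T (x + s t) p) := by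
      rw [hDdef]
      apply Finset.sum_le_sum_of_subset_of_nonneg (hPtsub (t-1) t (by omega) htL)
      intro p _ _
      have := dLen_le f T (x + s t) p
      linarith
    refine h1.trans ?_
    unfold rGain
    rw [hDdef, ← Finset.sum_sub_distrib]
    apply le_of_eq
    apply Finset.sum_congr rfl
    intro p _
    rw [hxst]
    ring
  have hexp : ∀ t, 1 ≤ t → t ≤ L →
      D t ≤ D (t-1) * Real.exp (-((1 - ϵ) * xhat t / S)) := by
    intro t ht htL
    have h1 := hKEY t ht htL
    have h2 := hrle t ht htL
    have h3 := hDrec t ht htL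
    have hxt := hxhat t ht htL
    have hc : D t ≤ D (t-1) * (1 - (1 - ϵ) * xhat t / S) := by
      have h4 : (1 - ϵ) * D (t-1) * xhat t / S ≤
          rGain f T (Pt (t-1)) (x + s (t-1)) (v t) (xhat t) := by
        rw [div_le_iff₀ hSpos]
        nlinarith [h1, h2]
      have h5 : D (t-1) * (1 - (1 - ϵ) * xhat t / S)
          = D (t-1) - (1 - ϵ) * D (t-1) * xhat t / S := by
        field_simp
      rw [h5]
      linarith
    refine hc.trans ?_
    apply mul_le_mul_of_nonneg_left _ (hDnn (t-1))
    have := Real.add_one_le_exp (-((1 - ϵ) * xhat t / S))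
    linarith
  have hiter : ∀ n, n ≤ L →
      D n ≤ D 0 * Real.exp (-((1 - ϵ) * (∑ t ∈ Finset.Icc 1 n, xhat t) / S)) := by
    intro n
    induction n with
    | zero => intro _; simp
    | succ m ih =>
      intro h
      have h1 := hexp (m+1) (by omega) h
      simp only [Nat.add_sub_cancel] at h1
      have h2 := ih (by omega)
      have h3 : D m * Real.exp (-((1 - ϵ) * xhat (m+1) / S))
          ≤ (D 0 * Real.exp (-((1 - ϵ) * (∑ t ∈ Finset.Icc 1 m, xhat t) / S)))
            * Real.exp (-((1 - ϵ) * xhat (m+1) / S)) :=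
        mul_le_mul_of_nonneg_right h2 (Real.exp_pos _).le
      refine h1.trans (h3.trans (le_of_eq ?_))
      rw [mul_assoc, ← Real.exp_add, Finset.sum_Icc_succ_top (by omega : 1 ≤ m + 1)]
      congr 2
      field_simp
      ring
  have hD0 : D 0 ≤ (P.card : ℝ) * T := by
    rw [hDdef]
    calc ∑ p ∈ Pt 0, (T - dLen f T (x + s 0) p) ≤ ∑ p ∈ Pt 0, T := by
          apply Finset.sum_le_sum
          intro p _
          have : 0 ≤ dLen f T (x + s 0) p :=
            dLen_nonneg f T hT.le hf0 _ (hwnn 0 (by omega)) p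
          linarith
      _ = (Pt 0).card * T := by rw [Finset.sum_const, nsmul_eq_mul]
      _ ≤ (P.card : ℝ) * T := by
          apply mul_le_mul_of_nonneg_right _ hT.le
          exact_mod_cast Finset.card_le_card (hPtP 0)
  have hDfin : T * ε ≤ D (L-1) := by
    obtain ⟨p, hp⟩ := hfinal
    have hlt : dLen f T (x + s (L-1)) p < T * (1 - ε) := by
      rw [hPt] at hp
      exact (Finset.mem_filter.1 hp).2
    rw [hDdef]
    calc T * ε ≤ T - dLen f T (x + s (L-1)) p := by nlinarith
      _ ≤ ∑ p ∈ Pt (L-1), (T - dLen f T (x + s (L-1)) p) := by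
          apply Finset.single_le_sum _ hp
          intro q _
          have := dLen_le f T (x + s (L-1)) q
          linarith
  -- log bound on the first L-1 steps
  set A : ℝ := ∑ t ∈ Finset.Icc 1 (L-1), xhat t with hAdef
  have hlogP : 0 < (P.card : ℝ) * ε⁻¹ := by
    apply mul_pos _ (inv_pos.2 hε0)
    exact_mod_cast Finset.card_pos.2 hPne
  have hA : (1 - ϵ) * A ≤ S * Real.log ((P.card : ℝ) * ε⁻¹) := by
    have h1 := (hiter (L-1) (by omega)).trans
      (mul_le_mul_of_nonneg_right hD0 (Real.exp_pos _).le)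
    have h2 : T * ε ≤ (P.card : ℝ) * T * Real.exp (-((1 - ϵ) * A / S)) :=
      hDfin.trans h1
    have h3 : Real.exp ((1 - ϵ) * A / S) * (T * ε) ≤ (P.card : ℝ) * T := by
      have := mul_le_mul_of_nonneg_left h2 (Real.exp_pos ((1 - ϵ) * A / S)).le
      calc Real.exp ((1 - ϵ) * A / S) * (T * ε) ≤
            Real.exp ((1 - ϵ) * A / S) * ((P.card : ℝ) * T * Real.exp (-((1 - ϵ) * A / S))) :=
            this
        _ = (P.card : ℝ) * T * (Real.exp ((1 - ϵ) * A / S) * Real.exp (-((1 - ϵ) * A / S))) := by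
            ring
        _ = (P.card : ℝ) * T := by rw [← Real.exp_add]; simp
    have h4 : Real.exp ((1 - ϵ) * A / S) ≤ (P.card : ℝ) * ε⁻¹ := by
      rw [← mul_le_mul_iff_of_pos_right (mul_pos hT hε0)]
      calc Real.exp ((1 - ϵ) * A / S) * (T * ε) ≤ (P.card : ℝ) * T := h3
        _ = (P.card : ℝ) * ε⁻¹ * (T * ε) := by field_simp
    have h5 : (1 - ϵ) * A / S ≤ Real.log ((P.card : ℝ) * ε⁻¹) :=
      (Real.le_log_iff_exp_le hlogP).2 h4
    rw [div_le_iff₀ hSpos] at h5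
    linarith
  have hlast : (1 - ϵ) * xhat L ≤ S := by
    have h1 := hKEY L hL (le_refl L)
    have h2 := hrle L hL (le_refl L)
    have hDpos : 0 < D (L-1) := lt_of_lt_of_le (by nlinarith) hDfin
    have h3 : (1 - ϵ) * D (L-1) * xhat L ≤ D (L-1) * S := by
      refine h1.trans ?_
      exact mul_le_mul_of_nonneg_right h2 (le_of_lt hSpos)
    nlinarith
  have hsplit : ∑ t ∈ Finset.Icc 1 L, xhat t = A + xhat L := by
    rw [hAdef]
    have hL1 : L = (L - 1) + 1 := by omega
    rw [hL1, Finset.sum_Icc_succ_top (by omega : 1 ≤ L - 1 + 1)]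
    rw [← hL1]
  rw [hsplit, le_div_iff₀ (by linarith : (0:ℝ) < 1 - ϵ)]
  have hSnn : 0 ≤ S := hSpos.le
  nlinarith [hA, hlast]
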